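/- Let n ≥ 1 and let λ, μ be partitions of length n (weakly decreasing n-tuples of nonnegative integers) with |λ| ≥ |μ|, and let k be a nonnegative integer with 2k ≥ |λ| − |μ|. Then K̃^{D_n}_{λ,μ}(q) = K^{D_n}_{λ+kκ_n, μ+kκ_n}(q), where κ_n = (1,…,1) ∈ ℤ^n. -/
import Mathlib


open Finset Polynomial

noncomputable section

/-- The standard basis vector `ε_i` of `ℤ^n`. -/
def eps (n : ℕ) (i : Fin n) : Fin n → ℤ := Pi.single i 1

/-- Pairs `(i,j)` with `i < j`. -/
def pairsLt (n : ℕ) : Finset (Fin n × Fin n) :=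
  Finset.univ.filter fun p => p.1 < p.2

/-- Pairs `(i,j)` with `i ≤ j`. -/
def pairsLe (n : ℕ) : Finset (Fin n × Fin n) :=
  Finset.univ.filter fun p => p.1 ≤ p.2

/-- Positive roots of type `A_{n-1}`: the `ε_i - ε_j`, `i < j`. -/
def RA (n : ℕ) : Finset (Fin n → ℤ) :=
  (pairsLt n).image fun p => eps n p.1 - eps n p.2

/-- Positive roots of type `D_n`: the `ε_i - ε_j` and `ε_i + ε_j`, `i < j`. -/
def RD (n : ℕ) : Finset (Fin n → ℤ) :=
  RA n ∪ ((pairsLt n).image fun p => eps n p.1 + eps n p.2)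

/-- Positive roots of type `C_n`: those of `D_n` together with the `2ε_i`. -/
def RC (n : ℕ) : Finset (Fin n → ℤ) :=
  RD n ∪ (Finset.univ.image fun i : Fin n => (2 : ℤ) • eps n i)

/-- Positive roots of type `B_n`: those of `D_n` together with the `ε_i`. -/
def RB (n : ℕ) : Finset (Fin n → ℤ) :=
  RD n ∪ (Finset.univ.image fun i : Fin n => eps n i)

/-- The `q`-partition function attached to a finite set `R` of positive roots:
`P_q(β) = Σ_m q^{Σ_α m(α)}`, the sum over the (finitely many) functions
`m : R → ℕ` with `Σ_α m(α)·α = β`. -/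
def Pq (n : ℕ) (R : Finset (Fin n → ℤ)) (β : Fin n → ℤ) : Polynomial ℤ :=
  ∑ᶠ m ∈ {m : (Fin n → ℤ) → ℕ |
      (∀ α, α ∉ R → m α = 0) ∧ ∑ α ∈ R, m α • α = β},
    (X : Polynomial ℤ) ^ ∑ α ∈ R, m α

/-- `ρ_n = (n, n-1, ..., 1)`. -/
def rho (n : ℕ) : Fin n → ℤ := fun i => (n : ℤ) - ((i : ℕ) : ℤ)

/-- `ρ_{D_n} = (n-1, n-2, ..., 0)`. -/
def rhoD (n : ℕ) : Fin n → ℤ := fun i => (n : ℤ) - ((i : ℕ) : ℤ) - 1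

/-- The restricted alternating sum `K̃_{λ,μ}(q) = Σ_{σ ∈ S_n} sgn(σ) P_q(σ(λ+ρ_n) - (μ+ρ_n))`
attached to a set `R` of positive roots.  For `R = RA n` this is the type `A_{n-1}`
Kostka-Foulkes polynomial `K^{A_{n-1}}_{λ,μ}(q)`. -/
def KT (n : ℕ) (R : Finset (Fin n → ℤ)) (lam mu : Fin n → ℤ) : Polynomial ℤ :=
  ∑ σ : Equiv.Perm (Fin n),
    (Equiv.Perm.sign σ : ℤ) •
      Pq n R (fun i => (lam + rho n) (σ i) - (mu + rho n) i)

/-- The type `C_n` Kostka-Foulkes polynomial: the alternating sum over the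
hyperoctahedral group `W_{C_n}` (signed permutations, a signed permutation being
encoded as a pair `(σ, e)` acting by `v ↦ (i ↦ e i * v (σ i))`, whose determinant
is `sgn(σ) * ∏ i, e i`), with `ρ_{C_n} = ρ_n`. -/
def KC (n : ℕ) (lam mu : Fin n → ℤ) : Polynomial ℤ :=
  ∑ σ : Equiv.Perm (Fin n), ∑ e : Fin n → ℤˣ,
    ((Equiv.Perm.sign σ : ℤ) * ∏ i, (e i : ℤ)) •
      Pq n (RC n) (fun i => (e i : ℤ) * (lam + rho n) (σ i) - (mu + rho n) i)

/-- The type `D_n` Kostka-Foulkes polynomial: the alternating sum over `W_{D_n}`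
(signed permutations with an even number of sign changes), with `ρ_{D_n} = (n-1, ..., 0)`. -/
def KD (n : ℕ) (lam mu : Fin n → ℤ) : Polynomial ℤ :=
  ∑ σ : Equiv.Perm (Fin n),
    ∑ e ∈ Finset.univ.filter (fun e : Fin n → ℤˣ => ∏ i, e i = 1),
      ((Equiv.Perm.sign σ : ℤ) * ∏ i, (e i : ℤ)) •
        Pq n (RD n) (fun i => (e i : ℤ) * (lam + rhoD n) (σ i) - (mu + rhoD n) i)

/-- `c(δ)`: the number of families `(e_{rs})_{1 ≤ r ≤ s ≤ n}` of nonnegative integers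
with `Σ_{r ≤ s} e_{rs} (ε_r + ε_s) = δ`. -/
def cC (n : ℕ) (δ : Fin n → ℤ) : ℕ :=
  Set.ncard {e : Fin n × Fin n → ℕ |
    (∀ p, p ∉ pairsLe n → e p = 0) ∧
    ∑ p ∈ pairsLe n, e p • (eps n p.1 + eps n p.2) = δ}

/-- `d(δ)`: the number of families `(e_{rs})_{1 ≤ r < s ≤ n}` of nonnegative integers
with `Σ_{r < s} e_{rs} (ε_r + ε_s) = δ`. -/
def dD (n : ℕ) (δ : Fin n → ℤ) : ℕ :=
  Set.ncard {e : Fin n × Fin n → ℕ |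
    (∀ p, p ∉ pairsLt n → e p = 0) ∧
    ∑ p ∈ pairsLt n, e p • (eps n p.1 + eps n p.2) = δ}

/-- `f_q(β)`: the coefficient of `x^β` in
`∏_{i<j} (1 - q x_i/x_j)⁻¹ ∏_{r<s} (1 - q/(x_r x_s))⁻¹`, i.e. the sum of
`q^{Σ a + Σ b}` over families `a = (a_{ij})_{i<j}`, `b = (b_{rs})_{r<s}` of
nonnegative integers with `Σ a_{ij}(ε_i - ε_j) - Σ b_{rs}(ε_r + ε_s) = β`. -/
def fq (n : ℕ) (β : Fin n → ℤ) : Polynomial ℤ :=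
  ∑ᶠ ab ∈ {ab : ((Fin n × Fin n) → ℕ) × ((Fin n × Fin n) → ℕ) |
      (∀ p, p ∉ pairsLt n → ab.1 p = 0) ∧ (∀ p, p ∉ pairsLt n → ab.2 p = 0) ∧
      ((∑ p ∈ pairsLt n, ab.1 p • (eps n p.1 - eps n p.2)) -
        ∑ p ∈ pairsLt n, ab.2 p • (eps n p.1 + eps n p.2)) = β},
    (X : Polynomial ℤ) ^ ((∑ p ∈ pairsLt n, ab.1 p) + ∑ p ∈ pairsLt n, ab.2 p)

/-- `F_q(β)`: the coefficient of `x^β` in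
`∏_{i<j} (1 - q x_i/x_j)⁻¹ ∏_{r≤s} (1 - q/(x_r x_s))⁻¹`, i.e. the sum of
`q^{Σ a + Σ b}` over families `a = (a_{ij})_{i<j}`, `b = (b_{rs})_{r≤s}` of
nonnegative integers with `Σ a_{ij}(ε_i - ε_j) - Σ b_{rs}(ε_r + ε_s) = β`. -/
def Fq (n : ℕ) (β : Fin n → ℤ) : Polynomial ℤ :=
  ∑ᶠ ab ∈ {ab : ((Fin n × Fin n) → ℕ) × ((Fin n × Fin n) → ℕ) |
      (∀ p, p ∉ pairsLt n → ab.1 p = 0) ∧ (∀ p, p ∉ pairsLe n → ab.2 p = 0) ∧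
      ((∑ p ∈ pairsLt n, ab.1 p • (eps n p.1 - eps n p.2)) -
        ∑ p ∈ pairsLe n, ab.2 p • (eps n p.1 + eps n p.2)) = β},
    (X : Polynomial ℤ) ^ ((∑ p ∈ pairsLt n, ab.1 p) + ∑ p ∈ pairsLe n, ab.2 p)

/-- The `q`-multiplicity `u_{λ,μ}(q) = Σ_{σ ∈ S_n} sgn(σ) f_q(σ(λ+ρ_n) - (μ+ρ_n))`. -/
def uP (n : ℕ) (lam mu : Fin n → ℤ) : Polynomial ℤ :=
  ∑ σ : Equiv.Perm (Fin n),
    (Equiv.Perm.sign σ : ℤ) •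
      fq n (fun i => (lam + rho n) (σ i) - (mu + rho n) i)

/-- The `q`-multiplicity `U_{λ,μ}(q) = Σ_{σ ∈ S_n} sgn(σ) F_q(σ(λ+ρ_n) - (μ+ρ_n))`. -/
def UP (n : ℕ) (lam mu : Fin n → ℤ) : Polynomial ℤ :=
  ∑ σ : Equiv.Perm (Fin n),
    (Equiv.Perm.sign σ : ℤ) •
      Fq n (fun i => (lam + rho n) (σ i) - (mu + rho n) i)

/-- `1_ℕ(β) = 1` if all coordinates of `β` are nonnegative, and `0` otherwise. -/
def indNat (n : ℕ) (v : Fin n → ℤ) : ℤ := if ∀ i, 0 ≤ v i then 1 else 0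

/-- The branching coefficient `b_{λ,ν} = Σ_{σ ∈ S_n} sgn(σ) 1_ℕ(σ(λ+ρ_n) - (ν+ρ_n))`. -/
def bcoef (n : ℕ) (lam nu : Fin n → ℤ) : ℤ :=
  ∑ σ : Equiv.Perm (Fin n),
    (Equiv.Perm.sign σ : ℤ) *
      indNat n (fun i => (lam + rho n) (σ i) - (nu + rho n) i)

/-- The coefficient of `q^j` (for `j : ℤ`) in a polynomial: `0` for negative `j`. -/
def zcoeff (p : Polynomial ℤ) (j : ℤ) : ℤ := if 0 ≤ j then p.coeff j.toNat else 0

/-- The conjugate partition, padded with zeros to length `n`: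
`λ'_i = #{j : λ_j ≥ i}` (for the `i`-th coordinate, `i = 1, ..., n`). -/
def conj (n : ℕ) (lam : Fin n → ℤ) : Fin n → ℤ :=
  fun i => ((Finset.univ.filter fun j : Fin n => ((i : ℕ) : ℤ) + 1 ≤ lam j).card : ℤ)

end


lemma sum_eps (n : ℕ) (i : Fin n) : ∑ j, eps n i j = 1 := by
  simp [eps, Pi.single_apply]

lemma RD_sum_nonneg (n : ℕ) : ∀ α ∈ RD n, 0 ≤ ∑ i, α i := by
  intro α hα
  simp only [RD, RA, Finset.mem_union, Finset.mem_image] at hα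
  rcases hα with ⟨p, _, rfl⟩ | ⟨p, _, rfl⟩
  · simp [Finset.sum_sub_distrib, sum_eps]
  · simp [Finset.sum_add_distrib, sum_eps]

lemma Pq_RD_eq_zero (n : ℕ) (β : Fin n → ℤ) (h : ∑ i, β i < 0) :
    Pq n (RD n) β = 0 := by
  have hempty : {m : (Fin n → ℤ) → ℕ |
      (∀ α, α ∉ RD n → m α = 0) ∧ ∑ α ∈ RD n, m α • α = β} = ∅ := by
    ext m
    simp only [Set.mem_setOf_eq, Set.mem_empty_iff_false, iff_false, not_and]
    intro _ hm
    have hβ : ∑ i, β i = ∑ α ∈ RD n, (m α : ℤ) * ∑ i, α i := by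
      rw [← hm]
      simp only [Finset.sum_apply, Pi.smul_apply, nsmul_eq_mul, Pi.mul_apply,
        Pi.natCast_apply, Finset.mul_sum]
      rw [Finset.sum_comm]
    have : 0 ≤ ∑ i, β i := by
      rw [hβ]
      exact Finset.sum_nonneg fun α hα =>
        mul_nonneg (Int.natCast_nonneg _) (RD_sum_nonneg n α hα)
    exact absurd h (not_lt.2 this)
  rw [Pq, finsum_mem_congr hempty fun _ _ => rfl, finsum_mem_empty]

lemma exists_two_neg {n : ℕ} (e : Fin n → ℤˣ) (h1 : ∏ i, e i = 1) (h2 : e ≠ 1) :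
    ∃ i j, i ≠ j ∧ e i = -1 ∧ e j = -1 := by
  have hi : ∃ i, e i = -1 := by
    by_contra h
    push_neg at h
    apply h2; funext i
    rcases Int.units_eq_one_or (e i) with h' | h'
    · simpa using h'
    · exact absurd h' (h i)
  obtain ⟨i, hi⟩ := hi
  by_contra h
  push_neg at h
  have hp : ∏ j, e j = -1 := by
    rw [Finset.prod_eq_single i]
    · exact hi
    · intro b _ hb
      rcases Int.units_eq_one_or (e b) with h' | h'
      · exact h'
      · exact absurd h' (h i b (Ne.symm hb) hi)
    · simp
  rw [hp] at h1
  exact absurd h1 (by decide)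

/-- for partitions `λ, μ` of length `n` with `|λ| ≥ |μ|` and `2k ≥ |λ| - |μ|`,
`K̃^{D_n}_{λ,μ}(q) = K^{D_n}_{λ+kκ_n, μ+kκ_n}(q)` where `κ_n = (1,…,1)`. -/
theorem Ktilde_eq_KostkaFoulkes_D (n : ℕ) (hn : 1 ≤ n) (lam mu : Fin n → ℤ)
    (hlam : Antitone lam) (hlam0 : ∀ i, 0 ≤ lam i)
    (hmu : Antitone mu) (hmu0 : ∀ i, 0 ≤ mu i)
    (hsum : ∑ i, mu i ≤ ∑ i, lam i)
    (k : ℕ) (hk : (∑ i, lam i) - ∑ i, mu i ≤ 2 * (k : ℤ)) :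
    KT n (RD n) lam mu =
      KD n (fun i => lam i + (k : ℤ)) (fun i => mu i + (k : ℤ)) := by
  unfold KT KD
  refine Finset.sum_congr rfl fun σ _ => ?_
  set L : Fin n → ℤ := fun j => lam j + (k : ℤ) + rhoD n j with hL
  set M : Fin n → ℤ := fun j => mu j + (k : ℤ) + rhoD n j with hM
  have hLeq : ∀ j, ((fun i => lam i + (k:ℤ)) + rhoD n) j = L j := fun j => rfl
  have hMeq : ∀ j, ((fun i => mu i + (k:ℤ)) + rhoD n) j = M j := fun j => rfl
  have hmem : (1 : Fin n → ℤˣ) ∈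
      Finset.univ.filter (fun e : Fin n → ℤˣ => ∏ i, e i = 1) := by simp
  rw [Finset.sum_eq_single_of_mem (1 : Fin n → ℤˣ) hmem ?_]
  · simp only [Pi.one_apply, Units.val_one, one_mul, Finset.prod_const, one_pow, mul_one]
    have harg : (fun i => ((fun i => lam i + (k:ℤ)) + rhoD n) (σ i) -
        ((fun i => mu i + (k:ℤ)) + rhoD n) i) =
        (fun i => (lam + rho n) (σ i) - (mu + rho n) i) := by
      funext i
      simp only [Pi.add_apply, rho, rhoD]
      ring
    rw [harg]
  · intro e he hne
    obtain ⟨i0, j0, hij, hi0, hj0⟩ :=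
      exists_two_neg e (by simpa using (Finset.mem_filter.1 he).2) hne
    have hLlb : ∀ j : Fin n, (k : ℤ) + ((n : ℤ) - (j : ℕ) - 1) ≤ L j := by
      intro j
      have := hlam0 j
      simp only [hL, rhoD]
      omega
    have hL0 : ∀ j : Fin n, 0 ≤ L j := by
      intro j
      have h1 := hLlb j
      have h2 := j.isLt
      omega
    set T : Finset (Fin n) := Finset.univ.filter (fun i => e i = -1) with hT
    have hsplit : ∑ i, ((e i : ℤ) * L (σ i) - M i) =
        (∑ j, L j - ∑ j, M j) - 2 * ∑ i ∈ T, L (σ i) := by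
      have h1 : ∀ i : Fin n, (e i : ℤ) * L (σ i) - M i =
          (L (σ i) - M i) - (if e i = -1 then 2 * L (σ i) else 0) := by
        intro i
        rcases Int.units_eq_one_or (e i) with h | h <;> simp [h] <;> ring
      rw [Finset.sum_congr rfl fun i _ => h1 i, Finset.sum_sub_distrib,
        Finset.sum_sub_distrib, ← Finset.sum_filter, ← hT,
        Equiv.sum_comp σ L, Finset.mul_sum]
    have hTbound : 2 * (k : ℤ) + 1 ≤ ∑ i ∈ T, L (σ i) := by
      have hsub : ({i0, j0} : Finset (Fin n)) ⊆ T := by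
        intro x hx
        simp only [Finset.mem_insert, Finset.mem_singleton] at hx
        rcases hx with rfl | rfl <;> simp [hT, hi0, hj0]
      have h2 : ∑ i ∈ ({i0, j0} : Finset (Fin n)), L (σ i) ≤ ∑ i ∈ T, L (σ i) :=
        Finset.sum_le_sum_of_subset_of_nonneg hsub fun i _ _ => hL0 (σ i)
      rw [Finset.sum_pair hij] at h2
      have hne' : (σ i0 : ℕ) ≠ (σ j0 : ℕ) :=
        fun hc => hij (σ.injective (Fin.val_injective hc))
      have ha := hLlb (σ i0)
      have hb := hLlb (σ j0)
      have hc1 := (σ i0).isLt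
      have hc2 := (σ j0).isLt
      omega
    have hLM : ∑ j, L j - ∑ j, M j = ∑ j, lam j - ∑ j, mu j := by
      simp only [hL, hM, Finset.sum_add_distrib]
      ring
    have hneg : ∑ i, ((e i : ℤ) * ((fun i => lam i + (k:ℤ)) + rhoD n) (σ i) -
        ((fun i => mu i + (k:ℤ)) + rhoD n) i) < 0 := by
      simp only [hLeq, hMeq]
      rw [hsplit, hLM]
      omega
    rw [Pq_RD_eq_zero n _ hneg, smul_zero]
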